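/- Let a, b, c, d ≥ 1 be integers and let M be the 4×4 integer matrix with diagonal entries a, b, c, d and all off-diagonal entries equal to −1. If det M = 0 and min{a,b,c,d} = 3, then a = b = c = d = 3. -/

import Mathlib

set_option maxHeartbeats 1000000


theorem stmt_9 (a b c d : ℤ) (ha : 1 ≤ a) (hb : 1 ≤ b) (hc : 1 ≤ c) (hd : 1 ≤ d)
    (hdet : (!![a, -1, -1, -1;
                -1, b, -1, -1;
                -1, -1, c, -1;
                -1, -1, -1, d]).det = 0)
    (hmin : min a (min b (min c d)) = 3) :
    a = 3 ∧ b = 3 ∧ c = 3 ∧ d = 3 := by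
  have ha3 : 3 ≤ a := hmin ▸ min_le_left _ _
  have hb3 : 3 ≤ b := hmin ▸ (min_le_right a _).trans (min_le_left _ _)
  have hc3 : 3 ≤ c := hmin ▸ (min_le_right a _).trans ((min_le_right b _).trans (min_le_left _ _))
  have hd3 : 3 ≤ d := hmin ▸ (min_le_right a _).trans ((min_le_right b _).trans (min_le_right _ _))
  simp [Matrix.det_succ_row_zero, Fin.sum_univ_succ, Fin.succAbove, Fin.castSucc, Fin.castAdd, Fin.castLE] at hdet
  ring_nf at hdet
  have p1 : 0 ≤ (a - 3) * (b - 3) := mul_nonneg (by linarith) (by linarith)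
  have p2 : 0 ≤ (a - 3) * (c - 3) := mul_nonneg (by linarith) (by linarith)
  have p3 : 0 ≤ (a - 3) * (d - 3) := mul_nonneg (by linarith) (by linarith)
  have p4 : 0 ≤ (b - 3) * (c - 3) := mul_nonneg (by linarith) (by linarith)
  have p5 : 0 ≤ (b - 3) * (d - 3) := mul_nonneg (by linarith) (by linarith)
  have p6 : 0 ≤ (c - 3) * (d - 3) := mul_nonneg (by linarith) (by linarith)
  have p7 : 0 ≤ (a - 3) * (b - 3) * (c - 3) := mul_nonneg p1 (by linarith)
  have p8 : 0 ≤ (a - 3) * (b - 3) * (d - 3) := mul_nonneg p1 (by linarith)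
  have p9 : 0 ≤ (a - 3) * (c - 3) * (d - 3) := mul_nonneg p2 (by linarith)
  have p10 : 0 ≤ (b - 3) * (c - 3) * (d - 3) := mul_nonneg p4 (by linarith)
  have p11 : 0 ≤ (a - 3) * (b - 3) * (c - 3) * (d - 3) := mul_nonneg p7 (by linarith)
  refine ⟨by nlinarith, by nlinarith, by nlinarith, by nlinarith⟩
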